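/- Let |φ_PX⟩ := (i|0⟩ + |1⟩)/√2 ∈ ℂ², and define the orthogonal projections Π₀ := |00⟩⟨00| + |11⟩⟨11| and Π₁ := |01⟩⟨01| + |10⟩⟨10| on ℂ² ⊗ ℂ² (the two outcomes of the XOR measurement Γ₁). For every r, h ∈ {0,1} there exists a complex number γ_{r,h} with |γ_{r,h}| = 1/2, not depending on ψ, such that for every ψ ∈ ℂ²: ((X Z^{r⊕h}) ⊗ (H|h⟩⟨h|H)) ∘ Π_r ((T X ψ) ⊗ φ_PX) = γ_{r,h} · (Tψ) ⊗ (H|h⟩). In particular, measuring Γ₁, then measuring the second wire in the Hadamard basis with outcome h, and applying the correction Z^{r⊕h} followed by X to the first wire leaves the first wire in the state Tψ (up to a global phase), each branch occurring with probability 1/4 for unit ψ. -/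

import Mathlib

/-!
The `c = 1` branch of Claim 3.5 of "Quantum State Obfuscation from Classical Oracles":
measuring `Γ₁` on `(T X ψ) ⊗ φ_PX` with outcome `r`, measuring the second wire in the
Hadamard basis with outcome `h`, and applying the correction `Z^{r⊕h}` followed by `X`
to the first wire leaves the first wire in the state `Tψ`, up to a global phase
`γ_{r,h}` of modulus `1/2`.
-/

open scoped BigOperators ComplexConjugate

noncomputable section

attribute [local instance] Classical.propDecidable

/-- The single-qubit space `ℂ²`, with orthonormal basis indexed by `{0,1}`. -/
abbrev Q1 : Type := EuclideanSpace ℂ (ZMod 2)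

/-- The two-qubit space `ℂ² ⊗ ℂ²`. -/
abbrev Q2 : Type := EuclideanSpace ℂ (ZMod 2 × ZMod 2)

/-- The three-qubit space `ℂ² ⊗ ℂ² ⊗ ℂ²`. -/
abbrev Q3 : Type := EuclideanSpace ℂ (ZMod 2 × ZMod 2 × ZMod 2)

/-- The ±1 lift of a bit: `+1` if `b = 0` and `−1` if `b = 1`. -/
def sgn (b : ZMod 2) : ℂ := if b = 0 then 1 else -1

/-- The standard basis state `|b⟩`. -/
def ket (b : ZMod 2) : Q1 := WithLp.toLp 2 (fun v => if v = b then 1 else 0)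

/-- The Hadamard basis state `H|x⟩ = (|0⟩ + (−1)^x |1⟩)/√2`. -/
def hadKet (x : ZMod 2) : Q1 := WithLp.toLp 2 (fun v => sgn (x * v) / (Real.sqrt 2 : ℂ))

/-- The single-qubit Hadamard gate `H`. -/
def H1 (ψ : Q1) : Q1 := WithLp.toLp 2 (fun u => (Real.sqrt 2 : ℂ)⁻¹ * ∑ v, sgn (u * v) * ψ v)

/-- The tensor product of two single-qubit vectors. -/
def tens2 (a b : Q1) : Q2 := WithLp.toLp 2 (fun p => a p.1 * b p.2)

/-- The `PX`-magic state `|φ_PX⟩ = (i|0⟩ + |1⟩)/√2`. -/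
def phiPX : Q1 :=
  WithLp.toLp 2 (fun b => if b = 0 then Complex.I / (Real.sqrt 2 : ℂ) else 1 / (Real.sqrt 2 : ℂ))

/-- The `T` gate `diag(1, e^{iπ/4})`. -/
def Tgate (ψ : Q1) : Q1 := WithLp.toLp 2 (fun b => Complex.exp (Complex.I * Real.pi / 4) ^ b.val * ψ b)

/-- The Pauli power `X^c`. -/
def Xpow (c : ZMod 2) (ψ : Q1) : Q1 := WithLp.toLp 2 (fun v => ψ (v + c))

/-- The outcome-`r` orthogonal projection of the XOR measurement `Γ₁`:
`Π₀ = |00⟩⟨00| + |11⟩⟨11|` and `Π₁ = |01⟩⟨01| + |10⟩⟨10|`. -/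
def GammaOneProj (r : ZMod 2) (ψ : Q2) : Q2 :=
  WithLp.toLp 2 (fun p => if p.1 + p.2 = r then ψ p else 0)

/-- The operator `(X Z^{r⊕h}) ⊗ (H|h⟩⟨h|H)`: a Hadamard-basis-outcome-`h` projection
on the second wire together with the correction `Z^{r⊕h}` followed by `X` on the first
wire. -/
def corrTimesHadProj (r h : ZMod 2) (ψ : Q2) : Q2 :=
  WithLp.toLp 2 (fun p => hadKet h p.2 *
    ∑ b : ZMod 2, conj (hadKet h b) * (sgn ((r + h) * (p.1 + 1)) * ψ (p.1 + 1, b)))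

lemma csq : Complex.exp (Complex.I * Real.pi / 4) ^ 2 = Complex.I := by
  rw [← Complex.exp_nat_mul]
  rw [show (2:ℕ) * (Complex.I * Real.pi / 4) = (Real.pi/2 : ℝ) * Complex.I by push_cast; ring]
  simp [Complex.exp_mul_I, ← Complex.ofReal_cos, ← Complex.ofReal_sin]

lemma cabs : ‖Complex.exp (Complex.I * Real.pi / 4)‖ = 1 := by
  rw [Complex.norm_exp]; simp

lemma s2sq : ((Real.sqrt 2 : ℝ) : ℂ) * ((Real.sqrt 2 : ℝ) : ℂ) = 2 := by
  norm_cast; rw [Real.mul_self_sqrt]; norm_num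

lemma sinv : ((Real.sqrt 2:ℝ):ℂ)⁻¹ = ((Real.sqrt 2:ℝ):ℂ)/2 := by
  rw [eq_div_iff (by norm_num), inv_mul_eq_div, div_eq_iff (by norm_cast; positivity)]
  exact s2sq.symm

lemma spow2 : ((Real.sqrt 2:ℝ):ℂ)^2 = 2 := by rw [sq]; exact s2sq

lemma spow3 : ((Real.sqrt 2:ℝ):ℂ)^3 = 2*((Real.sqrt 2:ℝ):ℂ) := by
  rw [pow_succ, spow2]

lemma zsum (f : ZMod 2 → ℂ) : ∑ x, f x = f 0 + f 1 := Fin.sum_univ_two f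

lemma za0 : (0+1 : ZMod 2) = 1 := rfl
lemma za1 : (0+1+1 : ZMod 2) = 0 := rfl
lemma za2 : (1+1+1 : ZMod 2) = 1 := rfl
lemma za3 : (1+1 : ZMod 2) = 0 := rfl
lemma zv0 : ZMod.val (0 : ZMod 2) = 0 := rfl
lemma zv1 : ZMod.val (1 : ZMod 2) = 1 := rfl
lemma zv2 : ZMod.val (2 : ZMod 2) = 0 := rfl
lemma zf0 : @Eq (ZMod 2) (@OfNat.ofNat (Fin (1+1)) 0 _) 0 := rfl
lemma zf1 : @Eq (ZMod 2) (@OfNat.ofNat (Fin (1+1)) 1 _) 1 := rfl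
lemma conj2 : (starRingEnd ℂ) 2 = 2 := by exact_mod_cast Complex.conj_ofReal 2

set_option maxHeartbeats 2000000 in
/-- For every `r, h ∈ {0,1}` there is a complex number `γ_{r,h}` with `|γ_{r,h}| = 1/2`,
independent of `ψ`, such that for every `ψ ∈ ℂ²`:
`((X Z^{r⊕h}) ⊗ (H|h⟩⟨h|H)) ∘ Π_r ((T X ψ) ⊗ φ_PX) = γ_{r,h} · (Tψ) ⊗ (H|h⟩)`. -/
theorem magic_state_T_circuit_gamma_one_branch (r h : ZMod 2) :
    ∃ γ : ℂ, ‖γ‖ = 1 / 2 ∧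
      ∀ ψ : Q1,
        corrTimesHadProj r h (GammaOneProj r (tens2 (Tgate (Xpow 1 ψ)) phiPX))
          = γ • tens2 (Tgate ψ) (hadKet h) := by
  have key : ∀ γ : ℂ, (∀ ψ : Q1, ∀ p : ZMod 2 × ZMod 2,
      corrTimesHadProj r h (GammaOneProj r (tens2 (Tgate (Xpow 1 ψ)) phiPX)) p
        = γ * tens2 (Tgate ψ) (hadKet h) p) →
      (∀ ψ : Q1, corrTimesHadProj r h (GammaOneProj r (tens2 (Tgate (Xpow 1 ψ)) phiPX))
        = γ • tens2 (Tgate ψ) (hadKet h)) := by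
    intro γ hγ ψ
    ext p
    simpa using hγ ψ p
  fin_cases r <;> fin_cases h
  · refine ⟨Complex.exp (Complex.I * Real.pi / 4)/2, by simp [cabs], key _ ?_⟩
    intro ψ ⟨a, b⟩
    fin_cases a <;> fin_cases b <;>
      ( simp (config := { decide := true })
          [zf0, zf1, corrTimesHadProj, GammaOneProj, tens2, Tgate, Xpow, phiPX, hadKet, sgn, zsum, sinv, za0, za1, za2, za3, zv0, zv1, zv2, conj2]
        first
        | done
        | ( have he := csq
            generalize hE : Complex.exp (Complex.I * Real.pi / 4) = e at he ⊢
            have he3 : e^3 = Complex.I * e := by rw [pow_succ, he]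
            ring_nf
            try simp only [spow2, spow3, he, he3, Complex.I_sq, sinv, conj2, za0, za1, za2, za3, zv0, zv1, zv2]
            try ring_nf
            try simp only [spow2, spow3, he, he3, Complex.I_sq]
            try ring_nf
            try simp only [za0, za1, za2, za3, zv0, zv1, zv2]
            try ring_nf ) )
  · refine ⟨Complex.exp (Complex.I * Real.pi / 4)/2, by simp [cabs], key _ ?_⟩
    intro ψ ⟨a, b⟩
    fin_cases a <;> fin_cases b <;>
      ( simp (config := { decide := true })
          [zf0, zf1, corrTimesHadProj, GammaOneProj, tens2, Tgate, Xpow, phiPX, hadKet, sgn, zsum, sinv, za0, za1, za2, za3, zv0, zv1, zv2, conj2]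
        first
        | done
        | ( have he := csq
            generalize hE : Complex.exp (Complex.I * Real.pi / 4) = e at he ⊢
            have he3 : e^3 = Complex.I * e := by rw [pow_succ, he]
            ring_nf
            try simp only [spow2, spow3, he, he3, Complex.I_sq, sinv, conj2, za0, za1, za2, za3, zv0, zv1, zv2]
            try ring_nf
            try simp only [spow2, spow3, he, he3, Complex.I_sq]
            try ring_nf
            try simp only [za0, za1, za2, za3, zv0, zv1, zv2]
            try ring_nf ) )
  · refine ⟨-Complex.I * Complex.exp (Complex.I * Real.pi / 4)/2,
      by simp [map_div₀, cabs], key _ ?_⟩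
    intro ψ ⟨a, b⟩
    fin_cases a <;> fin_cases b <;>
      ( simp (config := { decide := true })
          [zf0, zf1, corrTimesHadProj, GammaOneProj, tens2, Tgate, Xpow, phiPX, hadKet, sgn, zsum, sinv, za0, za1, za2, za3, zv0, zv1, zv2, conj2]
        first
        | done
        | ( have he := csq
            generalize hE : Complex.exp (Complex.I * Real.pi / 4) = e at he ⊢
            have he3 : e^3 = Complex.I * e := by rw [pow_succ, he]
            ring_nf
            try simp only [spow2, spow3, he, he3, Complex.I_sq, sinv, conj2, za0, za1, za2, za3, zv0, zv1, zv2]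
            try ring_nf
            try simp only [spow2, spow3, he, he3, Complex.I_sq]
            try ring_nf
            try simp only [za0, za1, za2, za3, zv0, zv1, zv2]
            try ring_nf ) )
  · refine ⟨Complex.I * Complex.exp (Complex.I * Real.pi / 4)/2,
      by simp [map_div₀, cabs], key _ ?_⟩
    intro ψ ⟨a, b⟩
    fin_cases a <;> fin_cases b <;>
      ( simp (config := { decide := true })
          [zf0, zf1, corrTimesHadProj, GammaOneProj, tens2, Tgate, Xpow, phiPX, hadKet, sgn, zsum, sinv, za0, za1, za2, za3, zv0, zv1, zv2, conj2]
        first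
        | done
        | ( have he := csq
            generalize hE : Complex.exp (Complex.I * Real.pi / 4) = e at he ⊢
            have he3 : e^3 = Complex.I * e := by rw [pow_succ, he]
            ring_nf
            try simp only [spow2, spow3, he, he3, Complex.I_sq, sinv, conj2, za0, za1, za2, za3, zv0, zv1, zv2]
            try ring_nf
            try simp only [spow2, spow3, he, he3, Complex.I_sq]
            try ring_nf
            try simp only [za0, za1, za2, za3, zv0, zv1, zv2]
            try ring_nf ) )
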